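/- arXiv:1611.05529 — 3 statements merged into one kernel-verified Lean document; each statement's English description precedes it below -/
import Mathlib

section
/- Let I be a multi-interval (a finite disjoint union of nondegenerate compact intervals in ℝ) and let {I_i}_{i∈𝒥} be a family of multi-intervals contained in I which forms a 2-cover, i.e. there is a finite subset 𝒥' ⊆ 𝒥 such that for every pair of points (p,q) ∈ I × I there exists i ∈ 𝒥' with p ∈ I_i and q ∈ I_i. Then the union of the relative interiors of the I_i (interiors taken relative to I) equals the relative interior of I. -/
/-- A multi-interval: a finite disjoint union of nondegenerate compact intervals in ℝ. -/
def IsMultiInterval (V : Set ℝ) : Prop :=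
  ∃ (n : ℕ) (a b : Fin n → ℝ),
    (∀ k, a k < b k) ∧
    (∀ k l, k ≠ l → Disjoint (Set.Icc (a k) (b k)) (Set.Icc (a l) (b l))) ∧
    V = ⋃ k, Set.Icc (a k) (b k)

/-- The relative interior of `V` inside `I`: the largest subset of `V` open in `I`. -/
def relintIn (I V : Set ℝ) : Set ℝ :=
  {x | x ∈ V ∧ ∃ U : Set ℝ, IsOpen U ∧ x ∈ U ∧ U ∩ I ⊆ V}

/-- Repackage a multi-interval as a finite set of endpoint pairs. -/
lemma multiInterval_struct (V : Set ℝ) (h : IsMultiInterval V) :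
    ∃ S : Finset (ℝ × ℝ),
      (∀ cd ∈ S, cd.1 < cd.2 ∧ Set.Icc cd.1 cd.2 ⊆ V) ∧
      (∀ p ∈ V, ∃ cd ∈ S, p ∈ Set.Icc cd.1 cd.2) ∧
      (∀ cd ∈ S, ∀ cd' ∈ S, cd ≠ cd' →
        Disjoint (Set.Icc cd.1 cd.2) (Set.Icc cd'.1 cd'.2)) := by
  obtain ⟨n, a, b, h1, h2, h3⟩ := h
  refine ⟨Finset.image (fun k => (a k, b k)) Finset.univ, ?_, ?_, ?_⟩
  · intro cd hcd
    simp only [Finset.mem_image, Finset.mem_univ, true_and] at hcd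
    obtain ⟨k, hk⟩ := hcd
    subst hk
    exact ⟨h1 k, by rw [h3]; exact Set.subset_iUnion (fun k => Set.Icc (a k) (b k)) k⟩
  · intro p hp
    rw [h3] at hp
    obtain ⟨s, ⟨k, rfl⟩, hk⟩ := hp
    exact ⟨(a k, b k), Finset.mem_image.mpr ⟨k, Finset.mem_univ k, rfl⟩, hk⟩
  · intro cd hcd cd' hcd' hne
    simp only [Finset.mem_image, Finset.mem_univ, true_and] at hcd hcd'
    obtain ⟨k, hk⟩ := hcd
    obtain ⟨l, hl⟩ := hcd'
    subst hk; subst hl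
    exact h2 k l (fun h => hne (by rw [h]))

/-- If a family of multi-intervals contained in a multi-interval `I` forms a 2-cover of `I`,
then the relative interiors (inside `I`) of the members cover the relative interior of `I`. -/
theorem multiInterval_two_cover_relint_union {𝒥 : Type*} (I : Set ℝ) (Ii : 𝒥 → Set ℝ)
    (hI : IsMultiInterval I) (hIi : ∀ i, IsMultiInterval (Ii i)) (hsub : ∀ i, Ii i ⊆ I)
    (hcov : ∃ 𝒥' : Finset 𝒥, ∀ p ∈ I, ∀ q ∈ I, ∃ i ∈ 𝒥', p ∈ Ii i ∧ q ∈ Ii i) :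
    (⋃ i, relintIn I (Ii i)) = relintIn I I := by
  classical
  obtain ⟨𝒥', hcov⟩ := hcov
  -- relintIn I I = I
  have hRHS : relintIn I I = I := by
    ext x
    constructor
    · exact fun hx => hx.1
    · exact fun hx => ⟨hx, Set.univ, isOpen_univ, trivial, fun y hy => hy.2⟩
  rw [hRHS]
  apply Set.eq_of_subset_of_subset
  · intro x hx
    obtain ⟨i, hxi⟩ := Set.mem_iUnion.mp hx
    exact hsub i hxi.1
  -- the hard direction
  intro x hx
  obtain ⟨SI, hSI1, hSI2, hSI3⟩ := multiInterval_struct I hI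
  have hSi : ∀ i : 𝒥, ∃ S : Finset (ℝ × ℝ),
      (∀ cd ∈ S, cd.1 < cd.2 ∧ Set.Icc cd.1 cd.2 ⊆ Ii i) ∧
      (∀ p ∈ Ii i, ∃ cd ∈ S, p ∈ Set.Icc cd.1 cd.2) ∧
      (∀ cd ∈ S, ∀ cd' ∈ S, cd ≠ cd' →
        Disjoint (Set.Icc cd.1 cd.2) (Set.Icc cd'.1 cd'.2)) :=
    fun i => multiInterval_struct (Ii i) (hIi i)
  set Si : 𝒥 → Finset (ℝ × ℝ) := fun i => (hSi i).choose with hSidef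
  have hSispec := fun i => (hSi i).choose_spec
  -- the finite set of all relevant endpoints
  set E : Finset ℝ :=
    (SI.image Prod.fst ∪ SI.image Prod.snd) ∪
      𝒥'.biUnion (fun i => (Si i).image Prod.fst ∪ (Si i).image Prod.snd) with hEdef
  have hEI : ∀ cd ∈ SI, cd.1 ∈ E ∧ cd.2 ∈ E := by
    intro cd hcd
    constructor <;> simp only [hEdef, Finset.mem_union, Finset.mem_image] <;> left
    · left; exact ⟨cd, hcd, rfl⟩
    · right; exact ⟨cd, hcd, rfl⟩
  have hEi : ∀ i ∈ 𝒥', ∀ cd ∈ Si i, cd.1 ∈ E ∧ cd.2 ∈ E := by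
    intro i hi cd hcd
    constructor <;> simp only [hEdef, Finset.mem_union, Finset.mem_biUnion, Finset.mem_image] <;>
      right <;> exact ⟨i, hi, by first
        | exact Or.inl ⟨cd, hcd, rfl⟩
        | exact Or.inr ⟨cd, hcd, rfl⟩⟩
  -- choose η > 0 avoiding all endpoints other than x
  have hη : ∃ η > 0, ∀ e ∈ E, e ≠ x → η ≤ |e - x| := by
    by_cases h : (E.filter (fun e => e ≠ x)).Nonempty
    · refine ⟨min 1 ((E.filter (fun e => e ≠ x)).inf' h fun e => |e - x|), ?_, ?_⟩
      · apply lt_min one_pos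
        rw [Finset.lt_inf'_iff]
        intro e he
        simp only [Finset.mem_filter] at he
        exact abs_pos.mpr (sub_ne_zero.mpr he.2)
      · intro e he hne
        exact le_trans (min_le_right _ _)
          (Finset.inf'_le _ (Finset.mem_filter.mpr ⟨he, hne⟩))
    · refine ⟨1, one_pos, fun e he hne => absurd ⟨e, Finset.mem_filter.mpr ⟨he, hne⟩⟩ h⟩
  obtain ⟨η, hηpos, hηE⟩ := hη
  have hEside : ∀ e ∈ E, x - η < e → e < x + η → e = x := by
    intro e he h1 h2
    by_contra hne
    rcases le_abs.mp (hηE e he hne) with h | h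
    · linarith
    · linarith
  -- x's component in I
  obtain ⟨ab, habS, hab⟩ := hSI2 x hx
  obtain ⟨a, b⟩ := ab
  simp only at hab
  have hab1 : a ≤ x := hab.1
  have hab2 : x ≤ b := hab.2
  have haE := (hEI _ habS).1
  have hbE := (hEI _ habS).2
  -- every point of I near x lies in x's component
  have hnear : ∀ y ∈ I, x - η < y → y < x + η → y ∈ Set.Icc a b := by
    intro y hy hy1 hy2
    obtain ⟨cd, hcdS, hcd⟩ := hSI2 y hy
    have hc := (hEI _ hcdS).1
    have hd := (hEI _ hcdS).2
    have hcx : cd.1 ≤ x := by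
      rcases lt_or_ge (x - η) cd.1 with h | h
      · exact le_of_eq (hEside _ hc h (lt_of_le_of_lt hcd.1 hy2))
      · linarith
    have hdx : x ≤ cd.2 := by
      rcases lt_or_ge cd.2 (x + η) with h | h
      · exact ge_of_eq (hEside _ hd (lt_of_lt_of_le hy1 hcd.2) h)
      · linarith
    have heq : cd = (a, b) := by
      by_contra hne
      exact Set.disjoint_left.mp (hSI3 _ hcdS _ habS hne) ⟨hcx, hdx⟩ hab
    rw [heq] at hcd
    exact hcd
  -- apply the 2-cover to points just left and right of x within its component
  set p := max a (x - η / 2) with hpdef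
  set q := min b (x + η / 2) with hqdef
  have hpI : p ∈ I := (hSI1 _ habS).2 ⟨le_max_left _ _, max_le (le_trans hab1 hab2) (by linarith)⟩
  have hqI : q ∈ I := (hSI1 _ habS).2 ⟨le_min (le_trans hab1 hab2) (by linarith), min_le_left _ _⟩
  have hpx : p ≤ x := max_le hab1 (by linarith)
  have hqx : x ≤ q := le_min hab2 (by linarith)
  obtain ⟨i, hi𝒥, hpIi, hqIi⟩ := hcov p hpI q hqI
  obtain ⟨hSi1, hSi2, hSi3⟩ := hSispec i
  -- p's component in Ii i
  obtain ⟨cd, hcdS, hcd⟩ := hSi2 p hpIi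
  have hcE := (hEi i hi𝒥 _ hcdS).1
  have hdE := (hEi i hi𝒥 _ hcdS).2
  -- key claim
  have hclaim : Set.Ioo (x - η) (x + η) ∩ I ⊆ Ii i := by
    rintro y ⟨hyo, hyI⟩
    have hyab := hnear y hyI hyo.1 hyo.2
    have hcalt : cd.1 ≤ x - η ∨ (cd.1 = x ∧ a = x) := by
      rcases le_or_gt cd.1 (x - η) with h | h
      · exact Or.inl h
      · have hcx : cd.1 = x :=
          hEside _ hcE h (lt_of_le_of_lt (le_trans hcd.1 hpx) (by linarith))
        have : p = x := le_antisymm hpx (hcx ▸ hcd.1)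
        have hax : a = x := by
          rcases max_choice a (x - η / 2) with h' | h'
          · rw [hpdef] at this; rw [h'] at this; exact this
          · exfalso; rw [hpdef, h'] at this; linarith
        exact Or.inr ⟨hcx, hax⟩
    have hyc : cd.1 ≤ y := by
      rcases hcalt with h | ⟨h1, h2⟩
      · linarith [hyo.1]
      · rw [h1]; rw [h2] at hyab; exact hyab.1
    rcases le_or_gt (x + η) cd.2 with hdbig | hdsmall
    · -- d ≥ x + η : y ∈ [c,d] ⊆ Ii i
      exact (hSi1 _ hcdS).2 ⟨hyc, by linarith [hyo.2]⟩
    · -- d < x + η, so d = x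
      have hdx : cd.2 = x := by
        apply hEside _ hdE _ hdsmall
        have : x - η / 2 ≤ p := le_max_right _ _
        linarith [hcd.2]
      rcases eq_or_lt_of_le hab2 with hbx | hbx
      · -- b = x : y ≤ x = d
        have hyd : y ≤ cd.2 := by rw [hdx, hbx]; exact hyab.2
        exact (hSi1 _ hcdS).2 ⟨hyc, hyd⟩
      · -- b > x : contradiction via q's component
        exfalso
        have hqgt : x < q := lt_min hbx (by linarith)
        obtain ⟨cd', hcd'S, hcd'⟩ := hSi2 q hqIi
        have hc'E := (hEi i hi𝒥 _ hcd'S).1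
        rcases le_or_gt cd'.1 x with h | h
        · -- x in both components ⇒ same ⇒ d ≥ q > x = d
          have hne : cd ≠ cd' := by
            intro he
            rw [he] at hdx
            have := hcd'.2
            rw [hdx] at this
            linarith
          exact Set.disjoint_left.mp (hSi3 _ hcdS _ hcd'S hne)
            ⟨le_trans hcd.1 hpx, le_of_eq hdx.symm⟩
            ⟨h, le_trans (le_of_lt hqgt) hcd'.2⟩
        · -- x < c' < x + η : c' endpoint too close to x
          have hc'lt : cd'.1 < x + η := lt_of_le_of_lt hcd'.1 (lt_of_le_of_lt (min_le_right _ _) (by linarith))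
          have := hEside _ hc'E (by linarith) hc'lt
          linarith
  -- conclude
  refine Set.mem_iUnion.mpr ⟨i, ?_⟩
  show x ∈ Ii i ∧ ∃ U : Set ℝ, IsOpen U ∧ x ∈ U ∧ U ∩ I ⊆ Ii i
  exact ⟨hclaim ⟨⟨by linarith, by linarith⟩, hx⟩,
    Set.Ioo (x - η) (x + η), isOpen_Ioo, ⟨by linarith, by linarith⟩, hclaim⟩
end

section
/- Let X be a topological space and {V_i ⊆ X} a family of closed subsets such that ⋃_i (relint V_i)^n = X^n for every natural number n (a Weiss c-cover, where relint denotes relative interior in X). Then {V_i} is a 2-cover provided X is compact, i.e. if X is compact then there exists a finite subfamily {V_i}_{i∈𝒥'} with ⋃_{i∈𝒥'} V_i × V_i = X × X. -/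
/-- A Weiss c-cover of a compact space by closed subsets (the `n`-fold products of the
relative interiors cover `Xⁿ` for every `n`) is a 2-cover: some finite subfamily satisfies
`⋃ Vᵢ × Vᵢ = X × X`. (For subsets of `X` itself, the relative interior is the interior.) -/
theorem weiss_c_cover_is_two_cover {X : Type*} [TopologicalSpace X] {ι : Type*}
    (V : ι → Set X) (hV : ∀ i, IsClosed (V i))
    (h : ∀ n : ℕ, (⋃ i, {f : Fin n → X | ∀ k, f k ∈ interior (V i)}) = Set.univ)
    (hX : CompactSpace X) :
    ∃ 𝒥' : Finset ι, (⋃ i ∈ 𝒥', V i ×ˢ V i) = Set.univ := by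
  have hcpt : IsCompact (Set.univ : Set (X × X)) := isCompact_univ
  have hcov : (Set.univ : Set (X × X)) ⊆
      ⋃ i, interior (V i) ×ˢ interior (V i) := by
    rintro ⟨x, y⟩ -
    have hx : (![x, y] : Fin 2 → X) ∈
        ⋃ i, {f : Fin 2 → X | ∀ k, f k ∈ interior (V i)} := by
      rw [h 2]; trivial
    obtain ⟨i, hi⟩ := Set.mem_iUnion.mp hx
    exact Set.mem_iUnion.mpr ⟨i, hi 0, hi 1⟩
  obtain ⟨t, ht⟩ := hcpt.elim_finite_subcover
    (fun i => interior (V i) ×ˢ interior (V i))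
    (fun i => (isOpen_interior.prod isOpen_interior)) hcov
  refine ⟨t, Set.eq_univ_of_univ_subset fun p hp => ?_⟩
  obtain ⟨i, hit, hpi⟩ := Set.mem_iUnion₂.mp (ht hp)
  exact Set.mem_iUnion₂.mpr ⟨i, hit,
    interior_subset hpi.1, interior_subset hpi.2⟩
end

section
/- Let I = [0,5] and let φ: I → I be an orientation-preserving homeomorphism fixing a neighborhood of the boundary {0,5}. Suppose {U_1, …, U_m} is a finite open cover of the open interval (0,5). Then φ can be written as a finite composition φ = φ_1 ∘ ⋯ ∘ φ_n of orientation-preserving homeomorphisms of I, each of which is the identity outside a compact subset of some U_{i_s}. -/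
open Set Function Filter

private noncomputable def trunc (g : ℝ → ℝ) (c d : ℝ) : ℝ → ℝ := fun x =>
  if x ≤ c then g x else if x ≤ d then g c + (x - c) * (d - g c) / (d - c) else x

private lemma trunc_left {g : ℝ → ℝ} {c d x : ℝ} (hx : x ≤ c) : trunc g c d x = g x :=
  if_pos hx

private lemma trunc_right {g : ℝ → ℝ} {c d : ℝ} (hcd : c < d) {x : ℝ} (hx : d ≤ x) :
    trunc g c d x = x := by
  unfold trunc
  rcases le_or_gt x c with h | h
  · exact absurd (hx.trans h) (not_le.2 hcd)
  · rcases le_or_gt x d with h2 | h2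
    · have hxd : x = d := le_antisymm h2 hx
      have hdc : d - c ≠ 0 := by linarith
      rw [if_neg (not_le.2 h), if_pos h2, hxd]
      field_simp
      ring
    · rw [if_neg (not_le.2 h), if_neg (not_le.2 h2)]

private lemma trunc_strictMono {g : ℝ → ℝ} {c d : ℝ} (hg : StrictMono g)
    (hcd : c < d) (hgc : g c < d) : StrictMono (trunc g c d) := by
  have hdc : (0:ℝ) < d - c := by linarith
  have hslope : 0 < (d - g c) / (d - c) := div_pos (by linarith) hdc
  have hline : ∀ z, g c + (z - c) * (d - g c) / (d - c) = g c + (z - c) * ((d - g c) / (d - c)) :=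
    fun z => by ring
  intro x y hxy
  unfold trunc
  rcases le_or_gt x c with hxc | hxc
  · rw [if_pos hxc]
    rcases le_or_gt y c with hyc | hyc
    · rw [if_pos hyc]; exact hg hxy
    · rcases le_or_gt y d with hyd | hyd
      · rw [if_neg (not_le.2 hyc), if_pos hyd, hline]
        have h1 : g x ≤ g c := hg.monotone hxc
        have h2 : 0 < (y - c) * ((d - g c) / (d - c)) := mul_pos (by linarith) hslope
        linarith
      · rw [if_neg (not_le.2 hyc), if_neg (not_le.2 hyd)]
        have h1 : g x ≤ g c := hg.monotone hxc
        linarith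
  · have hyc : ¬ y ≤ c := by push_neg; linarith
    rcases le_or_gt x d with hxd | hxd
    · rw [if_neg (not_le.2 hxc), if_pos hxd]
      rcases le_or_gt y d with hyd | hyd
      · rw [if_neg hyc, if_pos hyd, hline, hline]
        have := mul_lt_mul_of_pos_right (show x - c < y - c by linarith) hslope
        linarith
      · rw [if_neg hyc, if_neg (not_le.2 hyd), hline]
        have h1 : (x - c) * ((d - g c) / (d - c)) ≤ (d - c) * ((d - g c) / (d - c)) :=
          mul_le_mul_of_nonneg_right (by linarith) hslope.le
        have h2 : (d - c) * ((d - g c) / (d - c)) = d - g c := by field_simp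
        linarith
    · have hyd : ¬ y ≤ d := by push_neg; linarith
      rw [if_neg (not_le.2 hxc), if_neg (not_le.2 hxd), if_neg hyc, if_neg hyd]
      exact hxy

private lemma trunc_continuous {g : ℝ → ℝ} {c d : ℝ} (hg : Continuous g) (hcd : c < d) :
    Continuous (trunc g c d) := by
  have hdc : d - c ≠ 0 := by intro h; linarith
  unfold trunc
  apply Continuous.if_le
  · exact hg
  · apply Continuous.if_le
    · fun_prop
    · exact continuous_id
    · exact continuous_id
    · exact continuous_const
    · intro x hx
      rw [hx]; field_simp; ring
  · exact continuous_id
  · exact continuous_const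
  · intro x hx
    rw [hx, if_pos hcd.le]
    field_simp
    ring

private lemma trunc_id {g : ℝ → ℝ} {c d : ℝ} (hcd : c < d) (h : ∀ x ≤ c, g x = x) (x : ℝ) :
    trunc g c d x = x := by
  have hdc : d - c ≠ 0 := by intro h'; linarith
  unfold trunc
  rcases le_or_gt x c with h1 | h1
  · rw [if_pos h1, h x h1]
  · rcases le_or_gt x d with h2 | h2
    · rw [if_neg (not_le.2 h1), if_pos h2, h c le_rfl]
      field_simp
      ring
    · rw [if_neg (not_le.2 h1), if_neg (not_le.2 h2)]

private lemma surj_of_id_outside {F : ℝ → ℝ} {a b : ℝ} (hc : Continuous F)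
    (h1 : ∀ x ≤ a, F x = x) (h2 : ∀ x, b ≤ x → F x = x) : Function.Surjective F := by
  apply Continuous.surjective hc
  · apply Filter.Tendsto.congr' _ Filter.tendsto_id
    filter_upwards [Filter.eventually_ge_atTop b] with x hx
    exact (h2 x hx).symm
  · apply Filter.Tendsto.congr' _ Filter.tendsto_id
    filter_upwards [Filter.eventually_le_atBot a] with x hx
    exact (h1 x hx).symm

private lemma invFun_package {F : ℝ → ℝ} (hc : Continuous F) (hm : StrictMono F)
    (hs : Function.Surjective F) :
    Continuous (Function.invFun F) ∧ StrictMono (Function.invFun F) ∧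
    (∀ x, Function.invFun F (F x) = x) ∧ (∀ y, F (Function.invFun F y) = y) := by
  have hinj := hm.injective
  have hli := Function.leftInverse_invFun hinj
  have hri := Function.rightInverse_invFun hs
  set e : ℝ ≃o ℝ := StrictMono.orderIsoOfSurjective F hm hs with he
  have hcoe : (e : ℝ → ℝ) = F := StrictMono.coe_orderIsoOfSurjective F hm hs
  have hsymm : Function.invFun F = (e.symm : ℝ → ℝ) := by
    funext y
    apply hinj
    rw [hri y, ← congrFun hcoe (e.symm y), e.apply_symm_apply]
  refine ⟨?_, ?_, hli, hri⟩
  · rw [hsymm]; exact e.symm.continuous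
  · rw [hsymm]; exact e.symm.strictMono

private lemma telescope (E Einv : ℕ → ℝ → ℝ) (h0 : ∀ y, E 0 (Einv 0 y) = y) :
    ∀ n : ℕ, (∀ q, q < n → ∀ x, Einv q (E q x) = x) →
      (List.ofFn fun s : Fin n => E (n - s.val) ∘ Einv (n - 1 - s.val)).foldr (· ∘ ·) id
        = E n ∘ Einv 0 := by
  intro n
  induction n with
  | zero => intro _; funext y; simpa using (h0 y).symm
  | succ n ih =>
    intro h
    rw [List.ofFn_succ, List.foldr_cons]
    have hfun : (fun s : Fin n =>
        E (n + 1 - (Fin.succ s).val) ∘ Einv (n + 1 - 1 - (Fin.succ s).val))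
        = fun s : Fin n => E (n - s.val) ∘ Einv (n - 1 - s.val) := by
      funext s
      have h1 : n + 1 - (Fin.succ s).val = n - s.val := by simp [Fin.val_succ]
      have h2 : n + 1 - 1 - (Fin.succ s).val = n - 1 - s.val := by
        simp [Fin.val_succ]; omega
      rw [h1, h2]
    rw [hfun, ih (fun q hq => h q (hq.trans (Nat.lt_succ_self n)))]
    funext y
    simp only [Function.comp_apply, Fin.val_zero, Nat.sub_zero, Nat.add_sub_cancel]
    rw [h n (Nat.lt_succ_self n)]

private noncomputable def Pt (φ : ℝ → ℝ) (N : ℕ) (i : ℕ) (x : ℝ) : ℝ :=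
  x + ((i : ℝ) / (N : ℝ)) * (φ x - x)

private noncomputable def gg (φ : ℝ → ℝ) (N i : ℕ) : ℝ → ℝ :=
  Pt φ N (i + 1) ∘ Function.invFun (Pt φ N i)

private noncomputable def EE (φ : ℝ → ℝ) (N k : ℕ) (δ ε : ℝ) (q : ℕ) : ℝ → ℝ := fun z =>
  trunc (gg φ N (q / k)) (δ + (q % k : ℕ) * ε) (δ + (q % k : ℕ) * ε + ε) (Pt φ N (q / k) z)

section basic
variable {φ : ℝ → ℝ} {N : ℕ} {δ ε : ℝ}

private lemma Pt_cont (hφ : Continuous φ) (i : ℕ) : Continuous (Pt φ N i) := by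
  unfold Pt; fun_prop

private lemma Pt_mono (hφ : StrictMono φ) (hN : 0 < N) {i : ℕ} (hi : i ≤ N) :
    StrictMono (Pt φ N i) := by
  have hNR : (0:ℝ) < N := by exact_mod_cast hN
  have ht0 : (0:ℝ) ≤ (i:ℝ)/(N:ℝ) := by positivity
  have ht1 : (i:ℝ)/(N:ℝ) ≤ 1 := by
    rw [div_le_one hNR]; exact_mod_cast hi
  intro x y hxy
  unfold Pt
  rcases eq_or_lt_of_le ht0 with h | h
  · rw [← h]; simpa using hxy
  · have A : 0 < ((i:ℝ)/(N:ℝ)) * (φ y - φ x) := mul_pos h (sub_pos.2 (hφ hxy))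
    have B : 0 ≤ (1 - (i:ℝ)/(N:ℝ)) * (y - x) := mul_nonneg (by linarith) (by linarith)
    nlinarith

private lemma Pt_id (hid : ∀ x : ℝ, x ∉ Set.Ioo δ (5 - δ) → φ x = x) (i : ℕ)
    {x : ℝ} (hx : x ∉ Set.Ioo δ (5 - δ)) : Pt φ N i x = x := by
  unfold Pt; rw [hid x hx]; ring
end basic

/-- Fragmentation for homeomorphisms of `[0,5]` supported away from the boundary.
Homeomorphisms of `[0,5]` that are the identity near the boundary are encoded as strictly
increasing continuous maps `ℝ → ℝ` that are the identity outside `(δ, 5-δ)`.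
Given a finite open cover `U_1, …, U_m` of `(0,5)`, any such `φ` is a finite composite
`φ = φ_1 ∘ ⋯ ∘ φ_n` of orientation-preserving homeomorphisms, each the identity outside
a compact subset of some `U_i`. -/
theorem fragmentation_interval (φ : ℝ → ℝ) (hcont : Continuous φ) (hmono : StrictMono φ)
    (δ : ℝ) (hδ : 0 < δ) (hδ' : δ < 5/2)
    (hid : ∀ x : ℝ, x ∉ Set.Ioo δ (5 - δ) → φ x = x)
    (m : ℕ) (U : Fin m → Set ℝ) (hUopen : ∀ i, IsOpen (U i))
    (hUsub : ∀ i, U i ⊆ Set.Ioo (0:ℝ) 5) (hUcov : Set.Ioo (0:ℝ) 5 ⊆ ⋃ i, U i) :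
    ∃ (n : ℕ) (ψ : Fin n → (ℝ → ℝ)),
      (∀ s, Continuous (ψ s) ∧ StrictMono (ψ s)) ∧
      (∀ s, ∃ (i : Fin m) (K : Set ℝ), IsCompact K ∧ K ⊆ U i ∧ ∀ x ∉ K, ψ s x = x) ∧
      φ = (List.ofFn ψ).foldr (· ∘ ·) id := by
  classical
  -- Lebesgue number for the cover restricted to `Icc δ (5-δ)`
  have hsub0 : Set.Icc δ (5-δ) ⊆ Set.Ioo (0:ℝ) 5 := fun x hx =>
    ⟨lt_of_lt_of_le hδ hx.1, lt_of_le_of_lt hx.2 (by linarith)⟩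
  obtain ⟨L, hL, hball⟩ := lebesgue_number_lemma_of_metric isCompact_Icc hUopen
    (hsub0.trans hUcov)
  set ε := min (L/3) 1 with hεdef
  have hε0 : 0 < ε := lt_min (by linarith) one_pos
  have hεL : ε ≤ L/3 := min_le_left _ _
  have hε1 : ε ≤ 1 := min_le_right _ _
  -- a bound `M` on `|φ - id|`
  have hKne : (Set.Icc δ (5-δ)).Nonempty := ⟨δ, le_refl δ, by linarith⟩
  obtain ⟨x₀, hx₀, hmax⟩ := isCompact_Icc.exists_isMaxOn hKne
    (Continuous.continuousOn (by fun_prop : Continuous fun x : ℝ => |φ x - x|))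
  set M := |φ x₀ - x₀| with hMdef
  have hMnn : 0 ≤ M := abs_nonneg _
  have hMbd : ∀ x, |φ x - x| ≤ M := by
    intro x
    by_cases hx : x ∈ Set.Icc δ (5-δ)
    · exact hmax hx
    · have hx' : x ∉ Set.Ioo δ (5-δ) := fun hx' => hx ⟨hx'.1.le, hx'.2.le⟩
      rw [hid x hx']; simpa using hMnn
  set N := ⌊M / ε⌋₊ + 1 with hNdef
  have hN0 : 0 < N := Nat.succ_pos _
  have hNR : (0:ℝ) < (N:ℝ) := by exact_mod_cast hN0
  have hMN : M < (N:ℝ) * ε := by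
    have h1 : M / ε < (N:ℝ) := by
      rw [hNdef]; push_cast
      exact Nat.lt_floor_add_one (M/ε)
    calc M = M/ε * ε := by field_simp
      _ < (N:ℝ) * ε := mul_lt_mul_of_pos_right h1 hε0
  set k := ⌈(5 - 2*δ)/ε⌉₊ with hkdef
  have hk0 : 0 < k := Nat.ceil_pos.2 (div_pos (by linarith) hε0)
  have hkge : (5:ℝ) - 2*δ ≤ (k:ℝ) * ε := by
    have h := Nat.le_ceil ((5-2*δ)/ε)
    rw [div_le_iff₀ hε0] at h
    exact_mod_cast h
  have hkle : (k:ℝ) * ε ≤ 5 - 2*δ + ε := by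
    have h : (k:ℝ) < (5-2*δ)/ε + 1 := by
      rw [hkdef]; exact Nat.ceil_lt_add_one (div_nonneg (by linarith) hε0.le)
    have h2 : (k:ℝ) * ε < ((5-2*δ)/ε + 1) * ε := mul_lt_mul_of_pos_right h hε0
    have h3 : ((5-2*δ)/ε + 1) * ε = 5 - 2*δ + ε := by field_simp
    linarith
  -- basic facts about the isotopy `Pt`
  have hPtc : ∀ i : ℕ, Continuous (Pt φ N i) := fun i => Pt_cont hcont i
  have hPtm : ∀ i : ℕ, i ≤ N → StrictMono (Pt φ N i) := fun i hi => Pt_mono hmono hN0 hi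
  have hPtid : ∀ (i : ℕ) (x : ℝ), x ∉ Set.Ioo δ (5-δ) → Pt φ N i x = x :=
    fun i x hx => Pt_id hid i hx
  have hPts : ∀ i : ℕ, i ≤ N → Function.Surjective (Pt φ N i) := by
    intro i hi
    apply surj_of_id_outside (a := δ) (b := 5-δ) (hPtc i)
    · intro x hx; exact hPtid i x (fun h => absurd hx (not_le.2 h.1))
    · intro x hx; exact hPtid i x (fun h => absurd h.2 (not_lt.2 hx))
  have hPinv : ∀ i : ℕ, i ≤ N → Continuous (Function.invFun (Pt φ N i)) ∧
      StrictMono (Function.invFun (Pt φ N i)) ∧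
      (∀ x, Function.invFun (Pt φ N i) (Pt φ N i x) = x) ∧
      (∀ y, Pt φ N i (Function.invFun (Pt φ N i) y) = y) :=
    fun i hi => invFun_package (hPtc i) (hPtm i hi) (hPts i hi)
  have hPinvid : ∀ i : ℕ, i ≤ N → ∀ x, x ∉ Set.Ioo δ (5-δ) →
      Function.invFun (Pt φ N i) x = x := by
    intro i hi x hx
    have h := (hPinv i hi).2.2.1 x
    rwa [hPtid i x hx] at h
  have hPtN : ∀ x, Pt φ N N x = φ x := by
    intro x; unfold Pt
    rw [div_self (ne_of_gt hNR)]; ring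
  -- facts about the small steps `gg`
  have hggid : ∀ i : ℕ, i ≤ N → ∀ x, x ∉ Set.Ioo δ (5-δ) → gg φ N i x = x := by
    intro i hi x hx
    unfold gg
    simp only [Function.comp_apply]
    rw [hPinvid i hi x hx]
    exact hPtid (i+1) x hx
  have hggPt : ∀ i : ℕ, i ≤ N → ∀ x, gg φ N i (Pt φ N i x) = Pt φ N (i+1) x := by
    intro i hi x
    unfold gg; simp only [Function.comp_apply]; rw [(hPinv i hi).2.2.1 x]
  have hggcl : ∀ i : ℕ, i ≤ N → ∀ x, |gg φ N i x - x| < ε := by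
    intro i hi x
    obtain ⟨y, hy⟩ : ∃ y, Pt φ N i y = x := hPts i hi x
    have h1 : gg φ N i x = Pt φ N (i+1) y := by rw [← hy, hggPt i hi]
    have h2 : gg φ N i x - x = (1/(N:ℝ)) * (φ y - y) := by
      rw [h1, ← hy]; unfold Pt; push_cast; field_simp; ring
    rw [h2, abs_mul, abs_of_nonneg (by positivity : (0:ℝ) ≤ 1/(N:ℝ))]
    calc 1/(N:ℝ) * |φ y - y| ≤ 1/(N:ℝ) * M :=
          mul_le_mul_of_nonneg_left (hMbd y) (by positivity)
      _ < ε := by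
          rw [one_div_mul_eq_div, div_lt_iff₀ hNR]
          linarith [hMN]
  have hggm : ∀ i : ℕ, i + 1 ≤ N → StrictMono (gg φ N i) := by
    intro i hi
    exact (hPtm (i+1) hi).comp (hPinv i (by omega)).2.1
  have hggc : ∀ i : ℕ, i + 1 ≤ N → Continuous (gg φ N i) := by
    intro i hi
    exact (hPtc (i+1)).comp (hPinv i (by omega)).1
  -- the interpolating sequence `EE`
  set n := N * k with hndef
  have hn0 : 0 < n := Nat.mul_pos hN0 hk0
  have hEfact : ∀ q, q < n → Continuous (EE φ N k δ ε q) ∧ StrictMono (EE φ N k δ ε q) ∧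
      Function.Surjective (EE φ N k δ ε q) := by
    intro q hq
    have hiN : q / k < N := by
      apply Nat.div_lt_of_lt_mul
      rw [hndef, Nat.mul_comm] at hq
      exact hq
    have hjk : q % k < k := Nat.mod_lt _ hk0
    have hgcd : gg φ N (q/k) (δ + ((q % k : ℕ):ℝ) * ε) < δ + ((q % k : ℕ):ℝ) * ε + ε := by
      have h := (abs_lt.1 (hggcl (q/k) hiN.le (δ + ((q % k : ℕ):ℝ) * ε))).2
      linarith
    have hδc : δ ≤ δ + ((q % k : ℕ):ℝ) * ε := by
      have : (0:ℝ) ≤ ((q % k : ℕ):ℝ) * ε := by positivity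
      linarith
    have hd6 : δ + ((q % k : ℕ):ℝ) * ε + ε ≤ 6 := by
      have hj1 : ((q % k : ℕ):ℝ) + 1 ≤ (k:ℝ) := by exact_mod_cast hjk
      nlinarith [hε0.le]
    have hidleft : ∀ x, x ≤ δ → EE φ N k δ ε q x = x := by
      intro x hx
      have hx' : x ∉ Set.Ioo δ (5-δ) := fun h => absurd hx (not_le.2 h.1)
      unfold EE
      rw [hPtid _ x hx', trunc_left (le_trans hx hδc), hggid (q/k) hiN.le x hx']
    have hidright : ∀ x, (6:ℝ) ≤ x → EE φ N k δ ε q x = x := by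
      intro x hx
      have hx' : x ∉ Set.Ioo δ (5-δ) := fun h => by
        have : (5:ℝ) - δ < 6 := by linarith
        linarith [h.2]
      unfold EE
      rw [hPtid _ x hx', trunc_right (by linarith) (le_trans hd6 hx)]
    have hc : Continuous (EE φ N k δ ε q) :=
      (trunc_continuous (hggc _ hiN) (by linarith)).comp (hPtc _)
    refine ⟨hc, ?_, ?_⟩
    · exact (trunc_strictMono (hggm _ hiN) (by linarith) hgcd).comp (hPtm _ hiN.le)
    · exact surj_of_id_outside hc hidleft hidright
  set Einv := fun q => Function.invFun (EE φ N k δ ε q) with hEinvdef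
  have hIfact : ∀ q, q < n → Continuous (Einv q) ∧ StrictMono (Einv q) ∧
      (∀ x, Einv q (EE φ N k δ ε q x) = x) ∧ (∀ y, EE φ N k δ ε q (Einv q y) = y) :=
    fun q hq => invFun_package (hEfact q hq).1 (hEfact q hq).2.1 (hEfact q hq).2.2
  have hE0 : ∀ x, EE φ N k δ ε 0 x = x := by
    intro x
    unfold EE
    rw [Nat.zero_div, Nat.zero_mod]
    simp only [Nat.cast_zero, zero_mul, add_zero]
    have hP0 : Pt φ N 0 x = x := by unfold Pt; simp
    rw [hP0]
    exact trunc_id (by linarith)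
      (fun y hy => hggid 0 (by omega) y (fun h => absurd hy (not_le.2 h.1))) x
  have hEnx : ∀ x, EE φ N k δ ε n x = φ x := by
    intro x
    unfold EE
    rw [hndef, Nat.mul_div_cancel _ hk0, Nat.mul_mod_left]
    simp only [Nat.cast_zero, zero_mul, add_zero]
    rw [trunc_id (by linarith)
      (fun y hy => hggid N le_rfl y (fun h => absurd hy (not_le.2 h.1))) _]
    exact hPtN x
  -- the support estimate
  have hsupp : ∀ q, q < n → ∀ z,
      EE φ N k δ ε (q+1) z ≠ EE φ N k δ ε q z →
      EE φ N k δ ε q z ∈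
        Set.Ioo (δ + ((q % k : ℕ):ℝ)*ε - ε) (δ + ((q % k : ℕ):ℝ)*ε + 2*ε) := by
    intro q hq z hne
    have hiN : q / k < N := by
      apply Nat.div_lt_of_lt_mul
      rw [hndef, Nat.mul_comm] at hq
      exact hq
    have hjk : q % k < k := Nat.mod_lt _ hk0
    set i := q / k with hidef
    set j := q % k with hjdef
    set c : ℝ := δ + (j:ℝ) * ε with hcdef
    set w := Pt φ N i z with hwdef
    have hq' : q = j + k * i := by rw [hidef, hjdef]; exact (Nat.mod_add_div q k).symm
    have hEq : EE φ N k δ ε q z = trunc (gg φ N i) c (c+ε) w := rfl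
    have hgcd : gg φ N i c < c + ε := by
      have h := (abs_lt.1 (hggcl i hiN.le c)).2; linarith
    have hmono_t : StrictMono (trunc (gg φ N i) c (c+ε)) :=
      trunc_strictMono (hggm i hiN) (by linarith) hgcd
    by_cases hcase : j + 1 < k
    · -- not the last piece of a block
      have harr : q + 1 = (j+1) + k * i := by omega
      have hdiv : (q+1)/k = i := by
        rw [harr, Nat.add_mul_div_left _ _ hk0, Nat.div_eq_of_lt hcase, Nat.zero_add]
      have hmod : (q+1)%k = j+1 := by
        rw [harr, Nat.add_mul_mod_self_left, Nat.mod_eq_of_lt hcase]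
      have hEq1 : EE φ N k δ ε (q+1) z = trunc (gg φ N i) (c+ε) (c+ε+ε) w := by
        unfold EE
        rw [hdiv, hmod]
        have hcc : (δ + ((j+1 : ℕ):ℝ)*ε) = c + ε := by rw [hcdef]; push_cast; ring
        rw [hcc]
      rw [hEq1, hEq] at hne
      have hw : w ∈ Set.Ioo c (c + 2*ε) := by
        rcases le_or_gt w c with h | h
        · exact absurd (by rw [trunc_left (by linarith : w ≤ c+ε), trunc_left h]) hne
        · rcases le_or_gt (c + 2*ε) w with h2 | h2
          · exact absurd (by rw [trunc_right (by linarith) (by linarith : c+ε+ε ≤ w),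
              trunc_right (by linarith) (by linarith : c+ε ≤ w)]) hne
          · exact ⟨h, h2⟩
      rw [hEq]
      constructor
      · have h1 : trunc (gg φ N i) c (c+ε) c < trunc (gg φ N i) c (c+ε) w := hmono_t hw.1
        have h2' : trunc (gg φ N i) c (c+ε) c = gg φ N i c := trunc_left le_rfl
        rw [h2'] at h1
        have h2 := (abs_lt.1 (hggcl i hiN.le c)).1
        linarith
      · have h1 : trunc (gg φ N i) c (c+ε) w < trunc (gg φ N i) c (c+ε) (c+2*ε) :=
          hmono_t hw.2
        have h2 : trunc (gg φ N i) c (c+ε) (c+2*ε) = c+2*ε :=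
          trunc_right (by linarith) (by linarith)
        rw [h2] at h1
        linarith
    · -- the last piece of a block
      have hjk1 : j + 1 = k := by omega
      have hq1 : q + 1 = k * (i+1) := by
        have : k * (i+1) = k * i + k := by ring
        omega
      have hdiv : (q+1)/k = i+1 := by rw [hq1, Nat.mul_div_cancel_left _ hk0]
      have hmod : (q+1)%k = 0 := by rw [hq1, Nat.mul_mod_right]
      have hEq1 : EE φ N k δ ε (q+1) z = Pt φ N (i+1) z := by
        unfold EE
        rw [hdiv, hmod]
        simp only [Nat.cast_zero, zero_mul, add_zero]
        exact trunc_id (by linarith)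
          (fun y hy => hggid (i+1) hiN y (fun h => absurd hy (not_le.2 h.1))) _
      have hEq1' : EE φ N k δ ε (q+1) z = gg φ N i w := by
        rw [hEq1, hwdef]
        exact (hggPt i hiN.le z).symm
      rw [hEq1', hEq] at hne
      have hkε : (5:ℝ) - δ ≤ c + ε := by
        have hjc : ((j:ℝ)+1) = (k:ℝ) := by exact_mod_cast congrArg Nat.cast hjk1
        have h5 : c + ε = δ + (k:ℝ)*ε := by rw [hcdef, ← hjc]; ring
        rw [h5]; linarith
      have hw : w ∈ Set.Ioo c (c+ε) := by
        rcases le_or_gt w c with h | h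
        · exact absurd (trunc_left h).symm hne
        · rcases le_or_gt (c+ε) w with h2 | h2
          · have hgw : gg φ N i w = w :=
              hggid i hiN.le w (fun hy' => absurd hy'.2 (not_lt.2 (le_trans hkε h2)))
            exact absurd (by rw [hgw, trunc_right (by linarith) h2]) hne
          · exact ⟨h, h2⟩
      rw [hEq]
      constructor
      · have h1 := hmono_t hw.1
        have h2' : trunc (gg φ N i) c (c+ε) c = gg φ N i c := trunc_left le_rfl
        rw [h2'] at h1
        have h2 := (abs_lt.1 (hggcl i hiN.le c)).1
        linarith
      · have h1 := hmono_t hw.2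
        have h2 : trunc (gg φ N i) c (c+ε) (c+ε) = c+ε :=
          trunc_right (by linarith) le_rfl
        rw [h2] at h1
        linarith
  have hEn : EE φ N k δ ε n = φ := funext hEnx
  have hEcm : ∀ r, r ≤ n → Continuous (EE φ N k δ ε r) ∧ StrictMono (EE φ N k δ ε r) := by
    intro r hr
    rcases lt_or_eq_of_le hr with h | h
    · exact ⟨(hEfact r h).1, (hEfact r h).2.1⟩
    · rw [h, hEn]; exact ⟨hcont, hmono⟩
  refine ⟨n, fun s : Fin n => EE φ N k δ ε (n - s.val) ∘ Einv (n - 1 - s.val), ?_, ?_, ?_⟩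
  · intro s
    have hs := s.isLt
    have hq : n - 1 - s.val < n := by omega
    constructor
    · exact ((hEcm _ (by omega)).1).comp (hIfact _ hq).1
    · exact ((hEcm _ (by omega)).2).comp (hIfact _ hq).2.1
  · intro s
    have hs := s.isLt
    set q := n - 1 - s.val with hqdef
    have hq : q < n := by omega
    have h1 : n - s.val = q + 1 := by omega
    have hjk : q % k < k := Nat.mod_lt _ hk0
    have hsj : δ + ((q % k : ℕ):ℝ)*ε ∈ Set.Icc δ (5-δ) := by
      constructor
      · have h2 : (0:ℝ) ≤ ((q % k : ℕ):ℝ)*ε := by positivity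
        linarith
      · have hlt : ((q % k : ℕ):ℝ) < (5-2*δ)/ε := by
          have h3 : q % k < ⌈(5 - 2*δ)/ε⌉₊ := by rw [← hkdef]; exact hjk
          exact_mod_cast Nat.lt_ceil.1 h3
        have h4 := (lt_div_iff₀ hε0).1 hlt
        linarith
    obtain ⟨i', hi'⟩ := hball _ hsj
    refine ⟨i', Set.Icc (δ + ((q % k : ℕ):ℝ)*ε - ε) (δ + ((q % k : ℕ):ℝ)*ε + 2*ε),
      isCompact_Icc, ?_, ?_⟩
    · intro y hy
      apply hi'
      rw [Metric.mem_ball, Real.dist_eq]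
      have h2 : |y - (δ + ((q % k : ℕ):ℝ)*ε)| ≤ 2*ε := by
        rw [abs_le]
        constructor
        · linarith [hy.1]
        · linarith [hy.2]
      have h3 : 2*ε < L := by linarith
      linarith [abs_le.1 h2]
    · intro y hy
      show EE φ N k δ ε (n - s.val) (Einv q y) = y
      rw [h1]
      by_cases hz : EE φ N k δ ε (q+1) (Einv q y) = EE φ N k δ ε q (Einv q y)
      · rw [hz, (hIfact q hq).2.2.2 y]
      · exfalso
        have hin := hsupp q hq (Einv q y) hz
        rw [(hIfact q hq).2.2.2 y] at hin
        exact hy ⟨hin.1.le, hin.2.le⟩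
  · have h0 : ∀ y, EE φ N k δ ε 0 (Einv 0 y) = y := (hIfact 0 hn0).2.2.2
    have htel := telescope (EE φ N k δ ε) Einv h0 n (fun q hq x => (hIfact q hq).2.2.1 x)
    rw [htel]
    funext x
    have hi0 : Einv 0 x = x := by
      have h := (hIfact 0 hn0).2.2.2 x
      rw [hE0 (Einv 0 x)] at h
      exact h
    show φ x = EE φ N k δ ε n (Einv 0 x)
    rw [hi0, hEnx x]
end
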